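/- For all real x > 0 and y with 0 < y < 1, coth(x) - y coth(xy) > 0; equivalently, the function ψ(a) = a coth(a) - 1 satisfies ψ(xy) < ψ(x). -/

import Mathlib

noncomputable def coth (x : ℝ) : ℝ := Real.cosh x / Real.sinh x

noncomputable def ψ (a : ℝ) : ℝ := a * coth a - 1

lemma hasDerivAt_acoth (a : ℝ) (ha : 0 < a) :
    HasDerivAt (fun a => a * coth a)
      ((Real.cosh a * Real.sinh a - a) / (Real.sinh a) ^ 2) a := by
  have hs : Real.sinh a ≠ 0 := ne_of_gt (Real.sinh_pos_iff.2 ha)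
  have h1 : HasDerivAt Real.cosh (Real.sinh a) a := Real.hasDerivAt_cosh a
  have h2 : HasDerivAt Real.sinh (Real.cosh a) a := Real.hasDerivAt_sinh a
  have h3 : HasDerivAt coth
      ((Real.sinh a * Real.sinh a - Real.cosh a * Real.cosh a) / (Real.sinh a) ^ 2) a :=
    h1.div h2 hs
  have h4 : HasDerivAt (fun a => a * coth a) (1 * coth a + id a *
      ((Real.sinh a * Real.sinh a - Real.cosh a * Real.cosh a) / (Real.sinh a) ^ 2)) a :=
    (hasDerivAt_id a).mul h3
  convert h4 using 1
  have hc := Real.cosh_sq_sub_sinh_sq a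
  simp only [coth, id]
  field_simp
  ring_nf
  linear_combination a * hc

lemma acoth_strictMono : StrictMonoOn (fun a => a * coth a) (Set.Ioi 0) := by
  apply strictMonoOn_of_deriv_pos (convex_Ioi 0)
  · apply ContinuousOn.mul continuousOn_id
    exact Real.continuous_cosh.continuousOn.div Real.continuous_sinh.continuousOn
      (fun x hx => ne_of_gt (Real.sinh_pos_iff.2 hx))
  · intro a ha
    rw [interior_Ioi, Set.mem_Ioi] at ha
    rw [(hasDerivAt_acoth a ha).deriv]
    have hs : 0 < Real.sinh a := Real.sinh_pos_iff.2 ha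
    have h2a : 2 * a < Real.sinh (2 * a) := (Real.self_lt_sinh_iff.2 (by linarith))
    rw [Real.sinh_two_mul] at h2a
    have : 0 < Real.cosh a * Real.sinh a - a := by nlinarith
    positivity

theorem stmt_4 (x y : ℝ) (hx : 0 < x) (hy0 : 0 < y) (hy1 : y < 1) :
    coth x - y * coth (x * y) > 0 ∧ ψ (x * y) < ψ x := by
  have hb : 0 < x * y := mul_pos hx hy0
  have hlt : x * y < x := by nlinarith
  have h := acoth_strictMono (Set.mem_Ioi.2 hb) (Set.mem_Ioi.2 hx) hlt
  simp only at h
  constructor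
  · have hx' : 0 < x * (coth x - y * coth (x * y)) := by nlinarith
    nlinarith
  · simp only [ψ]
    linarith
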